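/- Let ψ ∈ ℂ^8 be a unit vector with real coordinates w₀,...,w₇ such that Δ(ψ) = (w₀w₇ - w₁w₆ - w₂w₅ + w₃w₄)² - 4(w₁w₂ - w₀w₃)(w₅w₆ - w₄w₇) < 0. Then there exists a 2×2 real orthogonal matrix U such that the vector cz₀₁·(I ⊗ I ⊗ U)·ψ, written as |0⟩A₁ + |1⟩B₁, satisfies det(A₁) = 0, where I is the 2×2 identity matrix. -/

import Mathlib

open Matrix Complex
open scoped ComplexConjugate

noncomputable section

/-- The matrix `T₀` of a 3-qubit state vector `ψ = |0⟩T₀ + |1⟩T₁`. -/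
def q3T0 (ψ : Fin 8 → ℂ) : Matrix (Fin 2) (Fin 2) ℂ := !![ψ 0, ψ 1; ψ 2, ψ 3]

/-- The matrix `T₁` of a 3-qubit state vector `ψ = |0⟩T₀ + |1⟩T₁`. -/
def q3T1 (ψ : Fin 8 → ℂ) : Matrix (Fin 2) (Fin 2) ℂ := !![ψ 4, ψ 5; ψ 6, ψ 7]

/-- bit of qubit 2 (leftmost) in the index `4a+2b+c`. -/
def bit2 (i : Fin 8) : Fin 2 := ⟨i.val / 4, by have := i.isLt; omega⟩
/-- bit of qubit 1 (middle). -/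
def bit1 (i : Fin 8) : Fin 2 := ⟨i.val / 2 % 2, by omega⟩
/-- bit of qubit 0 (rightmost). -/
def bit0 (i : Fin 8) : Fin 2 := ⟨i.val % 2, by omega⟩

/-- Kronecker product `U ⊗ V ⊗ W` acting on `ℂ^8`, with `|abc⟩` at index `4a+2b+c`. -/
def kron3 (U V W : Matrix (Fin 2) (Fin 2) ℂ) : Matrix (Fin 8) (Fin 8) ℂ :=
  fun i j => U (bit2 i) (bit2 j) * V (bit1 i) (bit1 j) * W (bit0 i) (bit0 j)

def cz01 : Matrix (Fin 8) (Fin 8) ℂ := diagonal ![1, 1, 1, -1, 1, 1, 1, -1]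
def cz02 : Matrix (Fin 8) (Fin 8) ℂ := diagonal ![1, 1, 1, 1, 1, -1, 1, -1]
def cz12 : Matrix (Fin 8) (Fin 8) ℂ := diagonal ![1, 1, 1, 1, 1, 1, -1, -1]

/-- Inclusion of a real 2×2 matrix into the complex 2×2 matrices. -/
def mc (W : Matrix (Fin 2) (Fin 2) ℝ) : Matrix (Fin 2) (Fin 2) ℂ :=
  W.map (fun r => (r : ℂ))

private lemma cv4' (a b c d e f g h : ℂ) : (![a,b,c,d,e,f,g,h] : Fin 8 → ℂ) 4 = e := rfl
private lemma cv5' (a b c d e f g h : ℂ) : (![a,b,c,d,e,f,g,h] : Fin 8 → ℂ) 5 = f := rfl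
private lemma cv6' (a b c d e f g h : ℂ) : (![a,b,c,d,e,f,g,h] : Fin 8 → ℂ) 6 = g := rfl
private lemma cv7' (a b c d e f g h : ℂ) : (![a,b,c,d,e,f,g,h] : Fin 8 → ℂ) 7 = h := rfl

set_option maxHeartbeats 1000000 in
private lemma key_det (ψ : Fin 8 → ℂ) (c s : ℝ) :
    (q3T0 ((cz01 * kron3 1 1 (mc !![c, -s; s, c])).mulVec ψ)).det =
      -(((c:ℂ) * ψ 0 - s * ψ 1) * (s * ψ 2 + c * ψ 3)) -
        (s * ψ 0 + c * ψ 1) * ((c:ℂ) * ψ 2 - s * ψ 3) := by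
  rw [← mulVec_mulVec]
  have hk : (kron3 1 1 (mc !![c, -s; s, c])).mulVec ψ =
      ![c * ψ 0 - s * ψ 1, s * ψ 0 + c * ψ 1, c * ψ 2 - s * ψ 3, s * ψ 2 + c * ψ 3,
        c * ψ 4 - s * ψ 5, s * ψ 4 + c * ψ 5, c * ψ 6 - s * ψ 7, s * ψ 6 + c * ψ 7] := by
    funext i
    fin_cases i <;>
      simp [kron3, mc, bit0, bit1, bit2, mulVec, dotProduct, Fin.sum_univ_eight,
        Matrix.one_apply, Fin.ext_iff, cv4', cv5', cv6', cv7',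
        show (((0:Fin 8)):ℕ) = 0 from rfl, show (((1:Fin 8)):ℕ) = 1 from rfl,
        show (((2:Fin 8)):ℕ) = 2 from rfl, show (((3:Fin 8)):ℕ) = 3 from rfl,
        show (((4:Fin 8)):ℕ) = 4 from rfl, show (((5:Fin 8)):ℕ) = 5 from rfl,
        show (((6:Fin 8)):ℕ) = 6 from rfl, show (((7:Fin 8)):ℕ) = 7 from rfl] <;> ring
  rw [hk]
  simp [q3T0, cz01, Matrix.det_fin_two_of, mulVec_diagonal]
  ring

/-- for a real unit state `ψ` with `Δ(ψ) < 0` there is a real orthogonal `U`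
such that `cz₀₁·(I ⊗ I ⊗ U)·ψ = |0⟩A₁ + |1⟩B₁` has `det A₁ = 0`. -/
theorem stmt_14 (ψ : Fin 8 → ℂ) (w : Fin 8 → ℝ) (hw : ∀ i, ψ i = (w i : ℂ))
    (hunit : ∑ i, ‖ψ i‖ ^ 2 = 1)
    (hΔ : (w 0 * w 7 - w 1 * w 6 - w 2 * w 5 + w 3 * w 4) ^ 2 -
        4 * (w 1 * w 2 - w 0 * w 3) * (w 5 * w 6 - w 4 * w 7) < 0) :
    ∃ U ∈ Matrix.orthogonalGroup (Fin 2) ℝ,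
      (q3T0 ((cz01 * kron3 1 1 (mc U)).mulVec ψ)).det = 0 := by
  set z : ℂ := ⟨w 1 * w 3 - w 0 * w 2, w 0 * w 3 + w 1 * w 2⟩ with hz
  set c : ℝ := Real.cos (z.arg / 2) with hc
  set s : ℝ := Real.sin (z.arg / 2) with hs
  have hcs : s ^ 2 + c ^ 2 = 1 := Real.sin_sq_add_cos_sq _
  refine ⟨!![c, -s; s, c], ?_, ?_⟩
  · rw [Matrix.mem_orthogonalGroup_iff]
    have hstar : (!![c, -s; s, c])ᵀ = !![c, s; -s, c] := by
      ext i j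
      fin_cases i <;> fin_cases j <;> simp [Matrix.star_apply]
    rw [hstar]
    ext i j
    fin_cases i <;> fin_cases j <;>
      simp [Matrix.mul_apply, Fin.sum_univ_two, Matrix.one_apply] <;>
      linarith [hcs]
  · rw [key_det]
    -- the real identity
    have h2c : c ^ 2 - s ^ 2 = Real.cos z.arg := by
      have h := Real.cos_two_mul (z.arg / 2)
      have h2 : 2 * (z.arg / 2) = z.arg := by ring
      rw [h2] at h
      rw [hc, hs] at *
      nlinarith [hcs, h]
    have h2s : 2 * s * c = Real.sin z.arg := by
      have h := Real.sin_two_mul (z.arg / 2)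
      have h2 : 2 * (z.arg / 2) = z.arg := by ring
      rw [h2] at h
      linarith [h]
    have hr : Real.sin z.arg * (w 1 * w 3 - w 0 * w 2) -
        Real.cos z.arg * (w 0 * w 3 + w 1 * w 2) = 0 := by
      by_cases h0 : z = 0
      · have h1 : w 1 * w 3 - w 0 * w 2 = 0 := congrArg Complex.re h0
        have h2 : w 0 * w 3 + w 1 * w 2 = 0 := congrArg Complex.im h0
        rw [h1, h2]; ring
      · rw [Complex.cos_arg h0, Complex.sin_arg z]
        have hre : z.re = w 1 * w 3 - w 0 * w 2 := rfl
        have him : z.im = w 0 * w 3 + w 1 * w 2 := rfl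
        rw [hre, him]
        have habs : ‖z‖ ≠ 0 := norm_ne_zero_iff.mpr h0
        field_simp
        ring
    have hreal : -((c * w 0 - s * w 1) * (s * w 2 + c * w 3)) -
        (s * w 0 + c * w 1) * (c * w 2 - s * w 3) = 0 := by
      rw [← h2s, ← h2c] at hr
      linear_combination hr
    simp only [hw]
    exact_mod_cast congrArg (fun r : ℝ => (r : ℂ)) hreal
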